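/- Let Ω ⊆ ℝ^k be an open convex cone not containing a line and x ∈ Ω. Then the isotropy subgroup G_x(Ω) = {A ∈ G(Ω) : Ax = x} is compact. -/

import Mathlib

open Matrix Filter Topology Set


private lemma cone_convex {k : ℕ} {Ω : Set (Fin k → ℝ)}
    (hcone : ∀ x ∈ Ω, ∀ y ∈ Ω, ∀ a b : ℝ, 0 < a → 0 < b → a • x + b • y ∈ Ω) :
    Convex ℝ Ω := by
  intro p hp q hq a b ha hb hab
  rcases ha.eq_or_lt with h | h
  · have hb1 : b = 1 := by linarith
    simp [← h, hb1, hq]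
  rcases hb.eq_or_lt with h' | h'
  · have ha1 : a = 1 := by linarith
    simp [← h', ha1, hp]
  exact hcone p hp q hq a b h h'

private lemma mem_of_mem_interior_closure {k : ℕ} {Ω : Set (Fin k → ℝ)}
    (hconv : Convex ℝ Ω) (hopen : IsOpen Ω) {z₀ : Fin k → ℝ} (hz₀ : z₀ ∈ Ω)
    {u : Fin k → ℝ} (hu : u ∈ interior (closure Ω)) : u ∈ Ω := by
  obtain ⟨ε, hε, hball⟩ := Metric.isOpen_iff.mp isOpen_interior u hu
  have hN : (0:ℝ) ≤ ‖u - z₀‖ := norm_nonneg _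
  set δ : ℝ := ε / (2 * (‖u - z₀‖ + 1)) with hδdef
  have hδ : 0 < δ := by positivity
  have h1 : δ * (‖u - z₀‖ + 1) = ε / 2 := by
    rw [hδdef]; field_simp
  have hδn : δ * ‖u - z₀‖ < ε := by nlinarith
  set u' : Fin k → ℝ := u + δ • (u - z₀) with hu'def
  have hu' : u' ∈ closure Ω := by
    have : u' ∈ Metric.ball u ε := by
      rw [Metric.mem_ball, dist_eq_norm]
      have : u' - u = δ • (u - z₀) := by rw [hu'def]; module
      rw [this, norm_smul, Real.norm_eq_abs, abs_of_pos hδ]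
      exact hδn
    exact interior_subset (hball this)
  have hseg : u ∈ openSegment ℝ z₀ u' := by
    refine ⟨δ / (1 + δ), 1 / (1 + δ), by positivity, by positivity, ?_, ?_⟩
    · field_simp; ring
    · rw [hu'def]; match_scalars <;> field_simp <;> ring
  have := Convex.openSegment_interior_closure_subset_interior hconv
    (by rwa [hopen.interior_eq]) hu' hseg
  rwa [hopen.interior_eq] at this


private lemma cone_line_bounded {k : ℕ} {Ω : Set (Fin k → ℝ)}
    (hopen : IsOpen Ω)
    (hcone : ∀ x ∈ Ω, ∀ y ∈ Ω, ∀ a b : ℝ, 0 < a → 0 < b → a • x + b • y ∈ Ω)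
    (hline : ¬ ∃ (p v : Fin k → ℝ), v ≠ 0 ∧ ∀ t : ℝ, p + t • v ∈ Ω)
    {x : Fin k → ℝ} (hx : x ∈ Ω) :
    Bornology.IsBounded (Ω ∩ {y | x - y ∈ Ω}) := by
  have hconv : Convex ℝ Ω := by
    intro p hp q hq a b ha hb hab
    rcases ha.eq_or_lt with h | h
    · have hb1 : b = 1 := by linarith
      simp [← h, hb1, hq]
    rcases hb.eq_or_lt with h' | h'
    · have ha1 : a = 1 := by linarith
      simp [← h', ha1, hp]
    exact hcone p hp q hq a b h h'
  by_contra hK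
  rw [isBounded_iff_forall_norm_le] at hK
  push_neg at hK
  choose y hyK hyn using fun n : ℕ => hK n
  have hypos : ∀ n : ℕ, (0:ℝ) < ‖y n‖ := fun n =>
    lt_of_le_of_lt (Nat.cast_nonneg n) (hyn n)
  set u : ℕ → (Fin k → ℝ) := fun n => ‖y n‖⁻¹ • y n with hudef
  have humem : ∀ n, u n ∈ Metric.sphere (0 : Fin k → ℝ) 1 := by
    intro n
    simp only [Metric.mem_sphere, dist_zero_right, hudef, norm_smul,
      Real.norm_eq_abs, abs_of_pos (inv_pos.mpr (hypos n))]
    rw [inv_mul_cancel₀ (hypos n).ne']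
  obtain ⟨v, hv, φ, hφ, hvt⟩ := (isCompact_sphere (0 : Fin k → ℝ) 1).tendsto_subseq humem
  have hv1 : ‖v‖ = 1 := by simpa [dist_zero_right] using hv
  have hv0 : v ≠ 0 := by intro h; rw [h] at hv1; simp at hv1
  -- membership for large n
  have hmemp : ∀ t : ℝ, 0 < t → ∀ n : ℕ, t < ‖y n‖ →
      (1 - t / ‖y n‖) • x + t • u n ∈ Ω := by
    intro t ht n hn
    have hs := hypos n
    have h1 : (0:ℝ) < 1 - t / ‖y n‖ := by
      rw [sub_pos, div_lt_one hs]; exact hn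
    have h2 : (0:ℝ) < t / ‖y n‖ := by positivity
    have := hcone x hx (y n) (hyK n).1 _ _ h1 h2
    have heq : (t / ‖y n‖) • y n = t • u n := by
      rw [hudef]; match_scalars; field_simp
    rwa [heq] at this
  have hmemm : ∀ t : ℝ, 0 < t → ∀ n : ℕ, t < ‖y n‖ → x - t • u n ∈ Ω := by
    intro t ht n hn
    have hs := hypos n
    have h1 : (0:ℝ) < 1 - t / ‖y n‖ := by
      rw [sub_pos, div_lt_one hs]; exact hn
    have h2 : (0:ℝ) < t / ‖y n‖ := by positivity
    have := hcone x hx (x - y n) (hyK n).2 _ _ h1 h2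
    have heq : (1 - t / ‖y n‖) • x + (t / ‖y n‖) • (x - y n) = x - t • u n := by
      rw [hudef]; match_scalars <;> ring
    rwa [heq] at this
  have hev : ∀ t : ℝ, ∀ᶠ n in atTop, t < ‖y (φ n)‖ := by
    intro t
    filter_upwards [eventually_gt_atTop ⌈t⌉₊] with n hn
    calc t ≤ (⌈t⌉₊ : ℝ) := Nat.le_ceil t
    _ < (n : ℝ) := by exact_mod_cast hn
    _ ≤ (φ n : ℝ) := by exact_mod_cast hφ.le_apply
    _ < ‖y (φ n)‖ := hyn (φ n)
  have hsinf : Tendsto (fun n => ‖y (φ n)‖) atTop atTop := by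
    apply tendsto_atTop_mono (fun n : ℕ => le_of_lt ?_) tendsto_natCast_atTop_atTop
    calc (n : ℝ) ≤ (φ n : ℝ) := by exact_mod_cast hφ.le_apply
    _ < ‖y (φ n)‖ := hyn (φ n)
  -- closure membership of x + t v for all real t
  have hcl : ∀ t : ℝ, x + t • v ∈ closure Ω := by
    have key : ∀ t : ℝ, 0 < t → x + t • v ∈ closure Ω ∧ x + (-t) • v ∈ closure Ω := by
      intro t ht
      have hdiv : Tendsto (fun n => t / ‖y (φ n)‖) atTop (𝓝 0) :=
        Tendsto.div_atTop tendsto_const_nhds hsinf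
      have hc0 : Tendsto (fun n => 1 - t / ‖y (φ n)‖) atTop (𝓝 1) := by
        have h := (tendsto_const_nhds (α := ℕ) (x := (1:ℝ))).sub hdiv
        simpa using h
      have htend1 : Tendsto (fun n => (1 - t / ‖y (φ n)‖) • x + t • (u ∘ φ) n)
          atTop (𝓝 (x + t • v)) := by
        have := (hc0.smul_const x).add (hvt.const_smul t)
        simpa using this
      have htend2 : Tendsto (fun n => x - t • (u ∘ φ) n) atTop (𝓝 (x - t • v)) :=
        tendsto_const_nhds.sub (hvt.const_smul t)
      refine ⟨mem_closure_of_tendsto htend1 <| (hev t).mono fun n hn =>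
        hmemp t ht (φ n) hn, ?_⟩
      have h' : x + (-t) • v = x - t • v := by module
      rw [h']
      exact mem_closure_of_tendsto htend2 <| (hev t).mono fun n hn =>
        hmemm t ht (φ n) hn
    intro t
    rcases lt_trichotomy t 0 with h | h | h
    · have := (key (-t) (by linarith)).2
      simpa using this
    · simpa [h] using subset_closure hx
    · exact (key t h).1
  -- upgrade to actual membership, producing a line
  refine hline ⟨x, v, hv0, fun t => ?_⟩
  have h2t := hcl (2 * t)
  have hseg : x + t • v ∈ openSegment ℝ x (x + (2*t) • v) :=
    ⟨1/2, 1/2, by norm_num, by norm_num, by norm_num, by module⟩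
  have := Convex.openSegment_interior_closure_subset_interior hconv
    (by rwa [hopen.interior_eq]) h2t hseg
  rwa [hopen.interior_eq] at this

private lemma entry_bound {k : ℕ} {Ω : Set (Fin k → ℝ)}
    (hopen : IsOpen Ω)
    (hcone : ∀ x ∈ Ω, ∀ y ∈ Ω, ∀ a b : ℝ, 0 < a → 0 < b → a • x + b • y ∈ Ω)
    (hline : ¬ ∃ (p v : Fin k → ℝ), v ≠ 0 ∧ ∀ t : ℝ, p + t • v ∈ Ω)
    {x : Fin k → ℝ} (hx : x ∈ Ω) :
    ∃ C : ℝ, 0 < C ∧ ∀ A : Matrix (Fin k) (Fin k) ℝ,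
      ((fun y => A.mulVec y) '' Ω = Ω) → A.mulVec x = x → ∀ i j, |A i j| ≤ C := by
  set K : Set (Fin k → ℝ) := Ω ∩ {y | x - y ∈ Ω} with hKdef
  obtain ⟨R, hR⟩ := (cone_line_bounded hopen hcone hline hx).subset_closedBall 0
  set c : Fin k → ℝ := (2:ℝ)⁻¹ • x with hcdef
  have hcΩ : c ∈ Ω := by
    have := hcone x hx x hx 4⁻¹ 4⁻¹ (by norm_num) (by norm_num)
    have heq : (4⁻¹:ℝ) • x + (4⁻¹:ℝ) • x = c := by rw [hcdef]; module
    rwa [heq] at this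
  have hcK : c ∈ K := by
    refine ⟨hcΩ, ?_⟩
    have heq : x - c = c := by rw [hcdef]; module
    simpa [heq] using hcΩ
  have hcR : ‖c‖ ≤ R := by
    have := hR hcK
    simpa [dist_zero_right] using this
  have hR0 : 0 ≤ R := le_trans (norm_nonneg c) hcR
  have hKopen : IsOpen K := by
    refine hopen.inter ?_
    have : {y : Fin k → ℝ | x - y ∈ Ω} = (fun y => x - y) ⁻¹' Ω := rfl
    rw [this]
    exact hopen.preimage (continuous_const.sub continuous_id)
  obtain ⟨r, hr, hball⟩ := Metric.isOpen_iff.mp hKopen c hcK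
  refine ⟨2 * (R + ‖c‖) / r + 1, by positivity, ?_⟩
  intro A hAΩ hAx i j
  -- A maps K into K
  have hmapΩ : ∀ w ∈ Ω, A.mulVec w ∈ Ω := by
    intro w hw
    rw [← hAΩ]; exact mem_image_of_mem _ hw
  have hmapK : ∀ w ∈ K, A.mulVec w ∈ K := by
    rintro w ⟨hw1, hw2⟩
    refine ⟨hmapΩ w hw1, ?_⟩
    have : x - A.mulVec w = A.mulVec (x - w) := by
      rw [Matrix.mulVec_sub, hAx]
    simpa [Set.mem_setOf_eq, this] using hmapΩ _ hw2
  have hAc : A.mulVec c = c := by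
    rw [hcdef, Matrix.mulVec_smul, hAx]
  -- operator bound
  have hop : ∀ v : Fin k → ℝ, ‖A.mulVec v‖ ≤ 2 * (R + ‖c‖) / r * ‖v‖ := by
    intro v
    rcases eq_or_ne v 0 with rfl | hv
    · simp [Matrix.mulVec_zero]
    have hs : (0:ℝ) < ‖v‖ := norm_pos_iff.mpr hv
    set w : Fin k → ℝ := c + (r / (2 * ‖v‖)) • v with hwdef
    have hwK : w ∈ K := by
      apply hball
      rw [Metric.mem_ball, dist_eq_norm]
      have h1 : w - c = (r / (2 * ‖v‖)) • v := by rw [hwdef]; module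
      rw [h1, norm_smul, Real.norm_eq_abs, abs_of_pos (by positivity)]
      have h2 : r / (2 * ‖v‖) * ‖v‖ = r / 2 := by field_simp
      rw [h2]; linarith
    have hAwK := hmapK w hwK
    have hAwR : ‖A.mulVec w‖ ≤ R := by
      have := hR hAwK; simpa [dist_zero_right] using this
    have hAw : A.mulVec w = c + (r / (2 * ‖v‖)) • A.mulVec v := by
      simp only [hwdef, Matrix.mulVec_add, Matrix.mulVec_smul, hAx, hcdef]
    have hnorm : (r / (2 * ‖v‖)) * ‖A.mulVec v‖ ≤ R + ‖c‖ := by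
      have h2 : (r / (2 * ‖v‖)) • A.mulVec v = A.mulVec w - c := by
        rw [hAw]; module
      calc (r / (2 * ‖v‖)) * ‖A.mulVec v‖
          = ‖(r / (2 * ‖v‖)) • A.mulVec v‖ := by
            rw [norm_smul, Real.norm_eq_abs, abs_of_pos (by positivity)]
        _ = ‖A.mulVec w - c‖ := by rw [h2]
        _ ≤ ‖A.mulVec w‖ + ‖c‖ := norm_sub_le _ _
        _ ≤ R + ‖c‖ := by linarith
    rw [div_mul_eq_mul_div, div_le_iff₀ (by positivity : (0:ℝ) < 2 * ‖v‖)] at hnorm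
    rw [div_mul_eq_mul_div, le_div_iff₀ hr]
    nlinarith
  -- entry bound
  have hsingle : ‖(Pi.single j 1 : Fin k → ℝ)‖ ≤ 1 := by
    rw [pi_norm_le_iff_of_nonneg zero_le_one]
    intro l
    rcases eq_or_ne l j with rfl | h
    · simp
    · simp [Pi.single_eq_of_ne h]
  have h1 : |A i j| ≤ ‖A.mulVec (Pi.single j 1)‖ := by
    have h2 := norm_le_pi_norm (A.mulVec (Pi.single j 1)) i
    rw [Matrix.mulVec_single] at h2
    simpa using h2
  calc |A i j| ≤ ‖A.mulVec (Pi.single j 1)‖ := h1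
    _ ≤ 2 * (R + ‖c‖) / r * ‖(Pi.single j 1 : Fin k → ℝ)‖ := hop _
    _ ≤ 2 * (R + ‖c‖) / r * 1 := by
        apply mul_le_mul_of_nonneg_left hsingle (by positivity)
    _ ≤ 2 * (R + ‖c‖) / r + 1 := by linarith

set_option maxHeartbeats 1000000 in
/-- For an open convex cone `Ω ⊆ ℝ^k` containing no line and a point
`x ∈ Ω`, the isotropy subgroup `G_x(Ω) = {A ∈ G(Ω) : Ax = x}` of the linear
automorphism group of `Ω` is compact. -/
theorem isotropy_compact (k : ℕ) (Ω : Set (Fin k → ℝ))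
    (hopen : IsOpen Ω)
    (hcone : ∀ x ∈ Ω, ∀ y ∈ Ω, ∀ a b : ℝ, 0 < a → 0 < b → a • x + b • y ∈ Ω)
    (hline : ¬ ∃ (p v : Fin k → ℝ), v ≠ 0 ∧ ∀ t : ℝ, p + t • v ∈ Ω)
    (x : Fin k → ℝ) (hx : x ∈ Ω) :
    IsCompact {A : Matrix (Fin k) (Fin k) ℝ |
      IsUnit A ∧ (fun y => A.mulVec y) '' Ω = Ω ∧ A.mulVec x = x} := by
  have hconv : Convex ℝ Ω := by
    intro p hp q hq a b ha hb hab
    rcases ha.eq_or_lt with h | h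
    · have hb1 : b = 1 := by linarith
      simp [← h, hb1, hq]
    rcases hb.eq_or_lt with h' | h'
    · have ha1 : a = 1 := by linarith
      simp [← h', ha1, hp]
    exact hcone p hp q hq a b h h'
  obtain ⟨C, hC, hbd⟩ := entry_bound hopen hcone hline hx
  set S := {A : Matrix (Fin k) (Fin k) ℝ |
      IsUnit A ∧ (fun y => A.mulVec y) '' Ω = Ω ∧ A.mulVec x = x} with hSdef
  set Box : Set (Matrix (Fin k) (Fin k) ℝ) :=
      {M | ∀ i j, M i j ∈ Set.Icc (-C) C} with hBoxdef
  have hBox : IsCompact Box := by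
    have : Box = Set.univ.pi
        (fun _ : Fin k => Set.univ.pi fun _ : Fin k => Set.Icc (-C) C) := by
      ext M
      exact ⟨fun h i _ j _ => h i j, fun h i j => h i (Set.mem_univ i) j (Set.mem_univ j)⟩
    rw [this]
    exact isCompact_univ_pi fun i => isCompact_univ_pi fun j => isCompact_Icc
  have hmemBox : ∀ A : Matrix (Fin k) (Fin k) ℝ,
      ((fun y => A.mulVec y) '' Ω = Ω) → A.mulVec x = x → A ∈ Box := by
    intro A h1 h2 i j
    have := hbd A h1 h2 i j
    rw [Set.mem_Icc]
    constructor <;> [linarith [neg_abs_le (A i j)]; linarith [le_abs_self (A i j)]]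
  -- inverses belong to S
  have hinv : ∀ A ∈ S, A⁻¹ ∈ S := by
    rintro A ⟨hu, himg, hax⟩
    have hdet : IsUnit A.det := (Matrix.isUnit_iff_isUnit_det A).mp hu
    have hmulinv : A⁻¹ * A = 1 := Matrix.nonsing_inv_mul A hdet
    have hmul : A * A⁻¹ = 1 := Matrix.mul_nonsing_inv A hdet
    have hcomp : ∀ z : Fin k → ℝ, A⁻¹.mulVec (A.mulVec z) = z := by
      intro z; rw [Matrix.mulVec_mulVec, hmulinv, Matrix.one_mulVec]
    refine ⟨?_, ?_, ?_⟩
    · rw [Matrix.isUnit_iff_isUnit_det]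
      exact Matrix.isUnit_det_of_right_inverse hmulinv
    · have : (fun y => A⁻¹.mulVec y) '' ((fun y => A.mulVec y) '' Ω) = Ω := by
        rw [← Set.image_comp]
        have : ((fun y => A⁻¹.mulVec y) ∘ fun y => A.mulVec y) = id := by
          funext z; exact hcomp z
        rw [this, Set.image_id]
      rwa [himg] at this
    · have h1 : A⁻¹.mulVec x = A⁻¹.mulVec (A.mulVec x) := by rw [hax]
      rw [h1, hcomp]
  -- the "limit maps Ω into Ω" principle
  have key : ∀ M N : Matrix (Fin k) (Fin k) ℝ, M * N = 1 → N * M = 1 →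
      (∀ z ∈ Ω, M.mulVec z ∈ closure Ω) → ∀ z ∈ Ω, M.mulVec z ∈ Ω := by
    intro M N hMN hNM hcl z hz
    have himg_eq : (fun y => M.mulVec y) '' Ω = (fun y => N.mulVec y) ⁻¹' Ω := by
      ext w
      constructor
      · rintro ⟨z', hz', rfl⟩
        simp only [Set.mem_preimage]
        rw [Matrix.mulVec_mulVec, hNM, Matrix.one_mulVec]
        exact hz'
      · intro hw
        refine ⟨N.mulVec w, hw, ?_⟩
        show M.mulVec (N.mulVec w) = w
        rw [Matrix.mulVec_mulVec, hMN, Matrix.one_mulVec]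
    have hUopen : IsOpen ((fun y => M.mulVec y) '' Ω) := by
      rw [himg_eq]
      exact hopen.preimage (continuous_const.matrix_mulVec continuous_id)
    have hUsub : (fun y => M.mulVec y) '' Ω ⊆ closure Ω := by
      rintro w ⟨z', hz', rfl⟩; exact hcl z' hz'
    have hUint : (fun y => M.mulVec y) '' Ω ⊆ interior (closure Ω) :=
      interior_maximal hUsub hUopen
    exact mem_of_mem_interior_closure hconv hopen hx
      (hUint (mem_image_of_mem _ hz))
  -- closedness
  letI : FirstCountableTopology (Matrix (Fin k) (Fin k) ℝ) :=
    (inferInstance : FirstCountableTopology (Fin k → Fin k → ℝ))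
  have hSclosed : IsClosed S := by
    apply IsSeqClosed.isClosed
    intro f A hf hfA
    have hg : ∀ n, (f n)⁻¹ ∈ S := fun n => hinv (f n) (hf n)
    have hgBox : ∀ n, (f n)⁻¹ ∈ Box := fun n =>
      hmemBox _ (hg n).2.1 (hg n).2.2
    obtain ⟨B, hB, φ, hφ, hgB⟩ := hBox.tendsto_subseq hgBox
    have hfφ : Tendsto (fun n => f (φ n)) atTop (𝓝 A) :=
      hfA.comp hφ.tendsto_atTop
    have hAB : A * B = 1 := by
      have h1 : Tendsto (fun n => f (φ n) * (f (φ n))⁻¹) atTop (𝓝 (A * B)) := by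
        have hpair : Tendsto (fun n => (f (φ n), (f (φ n))⁻¹)) atTop (𝓝 (A, B)) :=
          hfφ.prodMk_nhds hgB
        exact ((continuous_fst.matrix_mul continuous_snd).tendsto (A, B)).comp hpair
      have h2 : (fun n => f (φ n) * (f (φ n))⁻¹) = fun _ => (1 : Matrix (Fin k) (Fin k) ℝ) := by
        funext n
        exact Matrix.mul_nonsing_inv _ ((Matrix.isUnit_iff_isUnit_det _).mp (hf (φ n)).1)
      rw [h2] at h1
      exact tendsto_nhds_unique h1 tendsto_const_nhds
    have hBA : B * A = 1 := mul_eq_one_comm.mp hAB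
    have hAunit : IsUnit A := (Matrix.isUnit_iff_isUnit_det A).mpr
      (Matrix.isUnit_det_of_right_inverse hAB)
    have hmulVec_tendsto : ∀ (h : ℕ → Matrix (Fin k) (Fin k) ℝ)
        (M : Matrix (Fin k) (Fin k) ℝ), Tendsto h atTop (𝓝 M) →
        ∀ z : Fin k → ℝ, Tendsto (fun n => (h n).mulVec z) atTop (𝓝 (M.mulVec z)) := by
      intro h M hM z
      exact ((continuous_id.matrix_mulVec continuous_const).tendsto M).comp hM
    have hAx : A.mulVec x = x := by
      have h1 := hmulVec_tendsto f A hfA x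
      have h2 : (fun n => (f n).mulVec x) = fun _ => x := by
        funext n; exact (hf n).2.2
      rw [h2] at h1
      exact tendsto_nhds_unique h1 tendsto_const_nhds
    have hAcl : ∀ z ∈ Ω, A.mulVec z ∈ closure Ω := by
      intro z hz
      refine mem_closure_of_tendsto (hmulVec_tendsto f A hfA z) (Eventually.of_forall fun n => ?_)
      rw [← (hf n).2.1]; exact mem_image_of_mem _ hz
    have hBcl : ∀ z ∈ Ω, B.mulVec z ∈ closure Ω := by
      intro z hz
      refine mem_closure_of_tendsto
        (hmulVec_tendsto (fun n => (f (φ n))⁻¹) B hgB z) (Eventually.of_forall fun n => ?_)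
      rw [← (hg (φ n)).2.1]; exact mem_image_of_mem _ hz
    have hAsub := key A B hAB hBA hAcl
    have hBsub := key B A hBA hAB hBcl
    refine ⟨hAunit, ?_, hAx⟩
    apply Set.Subset.antisymm
    · rintro w ⟨z, hz, rfl⟩; exact hAsub z hz
    · intro z hz
      refine ⟨B.mulVec z, hBsub z hz, ?_⟩
      show A.mulVec (B.mulVec z) = z
      rw [Matrix.mulVec_mulVec, hAB, Matrix.one_mulVec]
  exact hBox.of_isClosed_subset hSclosed fun A hA => hmemBox A hA.2.1 hA.2.2
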